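/- If u ∈ ℂ^N is such that T(u) = Σ_{k=1}^r p_k a(f_k) a(f_k)ᴴ with p_k > 0 and distinct f_k (a Vandermonde decomposition of rank r ≤ N), and Y = Σ_{k=1}^r c_k a(f_k) φ_k with c_k > 0 and unit-norm φ_k, then there exists W ∈ ℂ^{L×L} such that U = [[W, Yᴴ],[Y, T(u)]] is positive semidefinite with rank(U) = r. -/

import Mathlib

open Complex Matrix Finset
open scoped ComplexOrder

/-- The atom `a(f) = (1, e^{i2πf}, …, e^{i2π(N-1)f})` as a vector in `ℂ^N`. -/
noncomputable def atom (N : ℕ) (f : ℝ) : Fin N → ℂ :=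
  fun j => Complex.exp (2 * Real.pi * Complex.I * ((j : ℕ) : ℂ) * (f : ℂ))

/-- Restriction of the atom to the index set `Ω`. -/
noncomputable def atomRes (N : ℕ) (Ω : Finset (Fin N)) (f : ℝ) : Ω → ℂ :=
  fun m => atom N f (m : Fin N)

/-- Spark of the continuous dictionary `A¹_Ω`: the smallest number of distinct atoms
`a_Ω(f)` with `f ∈ [0,1)` that are linearly dependent. -/
noncomputable def spark (N : ℕ) (Ω : Finset (Fin N)) : ℕ :=
  sInf {k | ∃ S : Finset ℝ, S.card = k ∧ (↑S : Set ℝ) ⊆ Set.Ico (0 : ℝ) 1 ∧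
    ¬ LinearIndependent ℂ (fun f : S => atomRes N Ω (f : ℝ))}

/-- The Hermitian Toeplitz matrix `T(u)` with first row `uᵀ`. -/
noncomputable def Toep (N : ℕ) (u : Fin N → ℂ) : Matrix (Fin N) (Fin N) ℂ :=
  fun j k =>
    if _h : (j : ℕ) ≤ (k : ℕ) then
      u ⟨(k : ℕ) - (j : ℕ), Nat.lt_of_le_of_lt (Nat.sub_le _ _) k.isLt⟩
    else
      (starRingEnd ℂ) (u ⟨(j : ℕ) - (k : ℕ), Nat.lt_of_le_of_lt (Nat.sub_le _ _) j.isLt⟩)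

/-- The block matrix `U = [[W, Yᴴ],[Y, T(u)]]`. -/
noncomputable def blockU (N L : ℕ) (W : Matrix (Fin L) (Fin L) ℂ)
    (Y : Matrix (Fin N) (Fin L) ℂ) (u : Fin N → ℂ) :
    Matrix (Fin L ⊕ Fin N) (Fin L ⊕ Fin N) ℂ :=
  Matrix.fromBlocks W Yᴴ Y (Toep N u)

section Aux

lemma atom_eq_pow (N : ℕ) (f : ℝ) (j : Fin N) :
    atom N f j = Complex.exp (2 * Real.pi * Complex.I * (f : ℂ)) ^ ((j : ℕ)) := by
  rw [atom, ← Complex.exp_nat_mul]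
  ring_nf

lemma node_inj {r : ℕ} (f : Fin r → ℝ) (hf : ∀ k, f k ∈ Set.Ico (0 : ℝ) 1)
    (hfdist : Function.Injective f) :
    Function.Injective (fun k => Complex.exp (2 * Real.pi * Complex.I * ((f k : ℝ) : ℂ))) := by
  intro a b hab
  apply hfdist
  simp only [Complex.exp_eq_exp_iff_exists_int] at hab
  obtain ⟨n, hn⟩ := hab
  have h2 : (2 * (Real.pi:ℂ) * Complex.I) ≠ 0 := by
    simp [Real.pi_ne_zero, Complex.I_ne_zero]
  have : (f a : ℂ) = (f b : ℂ) + n := by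
    have h3 : (2 * (Real.pi:ℂ) * Complex.I) * ((f a : ℝ) : ℂ) =
        (2 * (Real.pi:ℂ) * Complex.I) * (((f b : ℝ) : ℂ) + n) := by linear_combination hn
    exact mul_left_cancel₀ h2 h3
  have hre : f a = f b + n := by exact_mod_cast this
  have ha := hf a; have hb := hf b
  have : n = 0 := by
    have h1 : (n:ℝ) = f a - f b := by linarith
    have : |(n:ℝ)| < 1 := by rw [h1, abs_sub_lt_iff]; constructor <;> [linarith [ha.1, ha.2, hb.1, hb.2]; linarith [ha.1, ha.2, hb.1, hb.2]]
    exact_mod_cast by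
      have := Int.abs_lt_one_iff.mp (by exact_mod_cast this)
      exact this
  simp [this] at hre
  linarith

lemma atom_li (N r : ℕ) (hr : r ≤ N) (f : Fin r → ℝ)
    (hf : ∀ k, f k ∈ Set.Ico (0 : ℝ) 1) (hfdist : Function.Injective f) :
    LinearIndependent ℂ (fun k : Fin r => atom N (f k)) := by
  set z : Fin r → ℂ := fun k => Complex.exp (2 * Real.pi * Complex.I * ((f k : ℝ) : ℂ)) with hz
  have hzinj : Function.Injective z := node_inj f hf hfdist
  have hdet : (Matrix.vandermonde z).det ≠ 0 := by
    rw [Matrix.det_vandermonde]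
    apply Finset.prod_ne_zero_iff.mpr
    intro i _
    apply Finset.prod_ne_zero_iff.mpr
    intro j hj
    have : i ≠ j := by
      intro h; subst h; simp at hj
    exact sub_ne_zero_of_ne fun h => this (hzinj h.symm)
  have hunit : IsUnit (Matrix.vandermonde z) := by
    rw [Matrix.isUnit_iff_isUnit_det]
    exact isUnit_iff_ne_zero.mpr hdet
  have hrows : LinearIndependent ℂ (fun i => Matrix.vandermonde z i) :=
    Matrix.linearIndependent_rows_iff_isUnit.mpr hunit
  have hcomp : (LinearMap.funLeft ℂ ℂ (Fin.castLE hr)) ∘ (fun k : Fin r => atom N (f k))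
      = fun i => Matrix.vandermonde z i := by
    funext k
    funext j
    simp [LinearMap.funLeft, Matrix.vandermonde, atom_eq_pow, hz]
  exact LinearIndependent.of_comp (LinearMap.funLeft ℂ ℂ (Fin.castLE hr)) (hcomp ▸ hrows)

end Aux

/-- from a rank-`r` Vandermonde decomposition of `T(u)` and a matching
`r`-atom decomposition of `Y`, one can build `W` so that `U = [[W,Yᴴ],[Y,T(u)]]` is
PSD with `rank(U) = r`. -/
theorem lowrank_embedding_of_atomic_decomposition (N L r : ℕ) (u : Fin N → ℂ)
    (p : Fin r → ℝ) (c : Fin r → ℝ) (f : Fin r → ℝ) (φ : Fin r → Fin L → ℂ)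
    (hp : ∀ k, 0 < p k) (hc : ∀ k, 0 < c k)
    (hf : ∀ k, f k ∈ Set.Ico (0 : ℝ) 1) (hfdist : Function.Injective f)
    (hr : r ≤ N)
    (hφ : ∀ k, ∑ l, Complex.normSq (φ k l) = 1)
    (hT : ∀ i j, Toep N u i j = ∑ k, (p k : ℂ) * atom N (f k) i * star (atom N (f k) j))
    (Y : Matrix (Fin N) (Fin L) ℂ)
    (hY : ∀ j l, Y j l = ∑ k, (c k : ℂ) * atom N (f k) j * φ k l) :
    ∃ W : Matrix (Fin L) (Fin L) ℂ,
      (blockU N L W Y u).PosSemidef ∧ (blockU N L W Y u).rank = r := by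

  classical
  have hatoms : LinearIndependent ℂ (fun k : Fin r => atom N (f k)) :=
    atom_li N r hr f hf hfdist
  set v : Fin r → (Fin L ⊕ Fin N) → ℂ := fun k =>
    Sum.elim (fun i => ((c k / p k : ℝ) : ℂ) * star (φ k i)) (atom N (f k)) with hv
  have hvli : LinearIndependent ℂ v := by
    apply LinearIndependent.of_comp (LinearMap.funLeft ℂ ℂ (Sum.inr : Fin N → Fin L ⊕ Fin N))
    have hcomp : (LinearMap.funLeft ℂ ℂ (Sum.inr : Fin N → Fin L ⊕ Fin N)) ∘ v
        = fun k : Fin r => atom N (f k) := by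
      funext k; funext j; simp [hv, LinearMap.funLeft]
    rw [hcomp]; exact hatoms
  set C : Matrix (Fin L ⊕ Fin N) (Fin r) ℂ :=
    fun i k => ((Real.sqrt (p k) : ℝ) : ℂ) * v k i with hC
  set W : Matrix (Fin L) (Fin L) ℂ :=
    fun i j => ∑ k, ((c k ^ 2 / p k : ℝ) : ℂ) * star (φ k i) * φ k j with hW
  have hpne : ∀ k, p k ≠ 0 := fun k => (hp k).ne'
  have hpC : ∀ k, ((p k : ℝ) : ℂ) ≠ 0 := fun k => Complex.ofReal_ne_zero.mpr (hpne k)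
  have hs : ∀ k, ((Real.sqrt (p k) : ℝ) : ℂ) * ((Real.sqrt (p k) : ℝ) : ℂ) = ((p k : ℝ) : ℂ) := by
    intro k
    rw [← Complex.ofReal_mul, Real.mul_self_sqrt (hp k).le]
  have e2 : ∀ k, ((c k ^ 2 / p k : ℝ) : ℂ)
      = ((p k : ℝ) : ℂ) * ((c k / p k : ℝ) : ℂ) * ((c k / p k : ℝ) : ℂ) := by
    intro k
    push_cast
    field_simp [hpC k]
  have e3 : ∀ k, ((c k : ℝ) : ℂ) = ((p k : ℝ) : ℂ) * ((c k / p k : ℝ) : ℂ) := by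
    intro k
    push_cast
    field_simp [hpC k]
  have hU : blockU N L W Y u = C * Cᴴ := by
    ext i j
    rw [Matrix.mul_apply]
    rcases i with i | i <;> rcases j with j | j
    · show W i j = _
      rw [hW]
      apply Finset.sum_congr rfl
      intro k _
      simp only [Matrix.conjTranspose_apply]
      simp only [hC, hv, Matrix.conjTranspose_apply, Sum.elim_inl, Complex.star_def,
        _root_.map_mul, Complex.conj_conj, Complex.conj_ofReal]
      rw [e2 k, ← hs k]
      ring
    · show Yᴴ i j = _
      rw [Matrix.conjTranspose_apply, hY, star_sum]
      apply Finset.sum_congr rfl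
      intro k _
      simp only [Matrix.conjTranspose_apply]
      simp only [hC, hv, Matrix.conjTranspose_apply, Sum.elim_inl, Sum.elim_inr,
        Complex.star_def, _root_.map_mul, Complex.conj_conj, Complex.conj_ofReal]
      rw [e3 k, ← hs k]
      ring
    · show Y i j = _
      rw [hY]
      apply Finset.sum_congr rfl
      intro k _
      simp only [Matrix.conjTranspose_apply]
      simp only [hC, hv, Matrix.conjTranspose_apply, Sum.elim_inl, Sum.elim_inr,
        Complex.star_def, _root_.map_mul, Complex.conj_conj, Complex.conj_ofReal]
      rw [e3 k, ← hs k]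
      ring
    · show Toep N u i j = _
      rw [hT]
      apply Finset.sum_congr rfl
      intro k _
      simp only [Matrix.conjTranspose_apply]
      simp only [hC, hv, Matrix.conjTranspose_apply, Sum.elim_inr, Complex.star_def,
        _root_.map_mul, Complex.conj_ofReal]
      rw [← hs k]
      ring
  refine ⟨W, ?_, ?_⟩
  · rw [hU]
    exact Matrix.posSemidef_self_mul_conjTranspose C
  · rw [hU, Matrix.rank_self_mul_conjTranspose]
    have hwli : LinearIndependent ℂ (fun k => ((Real.sqrt (p k) : ℝ) : ℂ) • v k) := by
      have hne : ∀ k, ((Real.sqrt (p k) : ℝ) : ℂ) ≠ 0 := by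
        intro k
        simp only [ne_eq, Complex.ofReal_eq_zero]
        exact (Real.sqrt_pos.mpr (hp k)).ne'
      have := hvli.units_smul (fun k => Units.mk0 _ (hne k))
      convert this using 2
      rfl
    have hinj : Function.Injective C.mulVecLin := by
      rw [← LinearMap.ker_eq_bot, LinearMap.ker_eq_bot']
      intro x hx
      have hsum : ∑ k, x k • (((Real.sqrt (p k) : ℝ) : ℂ) • v k) = 0 := by
        funext i
        have hxi := congrFun hx i
        rw [Matrix.mulVecLin_apply] at hxi
        simpa [Matrix.mulVecLin_apply, Matrix.mulVec, dotProduct, hC,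
          Finset.sum_apply, smul_eq_mul, mul_comm, mul_assoc, mul_left_comm] using hxi
      funext k
      exact Fintype.linearIndependent_iff.mp hwli x hsum k
    rw [Matrix.rank, LinearMap.finrank_range_of_inj hinj]
    simp
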